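/- Let n ≥ 1, let κ ∈ {1, −1}, let a ∈ Mat_n, and set d = −κ·a. If y : ℂ → Mat_n is three times differentiable and satisfies the matrix Painlevé II equation P₂¹: y''(z) = κ[y(z), y'(z)] + 2 y(z)³ + z·y(z) + a for all z, then y satisfies the third-order reduced matrix mKdV equation: y'''(z) = 3 y(z)² y'(z) + 3 y'(z) y(z)² + y(z) + z·y'(z) + [d, y(z)] for all z. -/

import Mathlib

attribute [local instance] Matrix.normedAddCommGroup Matrix.normedSpace

noncomputable def mulCLM (n : ℕ) :
    Matrix (Fin n) (Fin n) ℂ →L[ℂ] Matrix (Fin n) (Fin n) ℂ →L[ℂ] Matrix (Fin n) (Fin n) ℂ :=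
  LinearMap.toContinuousLinearMap
    { toFun := fun x => LinearMap.toContinuousLinearMap (LinearMap.mul ℂ _ x)
      map_add' := by intro x y; ext m; simp [add_mul]
      map_smul' := by intro c x; ext m; simp [smul_mul_assoc] }

lemma HasDerivAt.matMul {n : ℕ} {f g : ℂ → Matrix (Fin n) (Fin n) ℂ}
    {f' g' : Matrix (Fin n) (Fin n) ℂ} {z : ℂ}
    (hf : HasDerivAt f f' z) (hg : HasDerivAt g g' z) :
    HasDerivAt (fun w => f w * g w) (f' * g z + f z * g') z := by
  have h1 : HasDerivAt (fun w => mulCLM n (f w)) (mulCLM n f') z := by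
    letI : NormedAddCommGroup (Matrix (Fin n) (Fin n) ℂ →L[ℂ] Matrix (Fin n) (Fin n) ℂ) :=
      ContinuousLinearMap.toNormedAddCommGroup
    letI : NormedSpace ℂ (Matrix (Fin n) (Fin n) ℂ →L[ℂ] Matrix (Fin n) (Fin n) ℂ) :=
      ContinuousLinearMap.toNormedSpace
    exact ((mulCLM n).hasFDerivAt.comp_hasDerivAt z hf)
  exact h1.clm_apply hg

/-- every solution of the matrix Painlevé II equation P₂¹
`y'' = κ[y,y'] + 2y³ + z y + a` (with `κ = ±1`) satisfies the self-similar
reduction of the matrix mKdV equation,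
`y''' = 3y²y' + 3y'y² + y + z y' + [d, y]` with `d = −κ a`. -/
theorem matrixP21_satisfies_mkdv_reduction (n : ℕ) (hn : 1 ≤ n)
    (κ : ℂ) (hκ : κ = 1 ∨ κ = -1)
    (a : Matrix (Fin n) (Fin n) ℂ) (d : Matrix (Fin n) (Fin n) ℂ)
    (hd : d = -(κ • a))
    (y : ℂ → Matrix (Fin n) (Fin n) ℂ)
    (hy : Differentiable ℂ y) (hy' : Differentiable ℂ (deriv y))
    (hy'' : Differentiable ℂ (deriv (deriv y)))
    (heq : ∀ z : ℂ, deriv (deriv y) z =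
      κ • (y z * deriv y z - deriv y z * y z) + (2 : ℂ) • (y z) ^ 3 + z • y z + a) :
    ∀ z : ℂ, deriv (deriv (deriv y)) z =
      3 * ((y z) ^ 2 * deriv y z) + 3 * (deriv y z * (y z) ^ 2) + y z + z • deriv y z
        + (d * y z - y z * d) := by
  intro z
  have hyz : HasDerivAt y (deriv y z) z := (hy z).hasDerivAt
  have hy'z : HasDerivAt (deriv y) (deriv (deriv y) z) z := (hy' z).hasDerivAt
  set Y := y z with hY
  set P := deriv y z with hP
  set Q := deriv (deriv y) z with hQ
  -- the RHS of the P2 equation as a function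
  have hF : deriv (deriv y) = fun w =>
      κ • (y w * deriv y w - deriv y w * y w) + (2 : ℂ) • (y w * (y w * y w))
        + w • y w + a := by
    funext w
    rw [heq w]
    simp [pow_succ, pow_two, mul_assoc]
  have hcube : HasDerivAt (fun w => y w * (y w * y w))
      (P * (Y * Y) + Y * (P * Y + Y * P)) z :=
    hyz.matMul (hyz.matMul hyz)
  have hcomm : HasDerivAt (fun w => y w * deriv y w - deriv y w * y w)
      ((P * P + Y * Q) - (Q * Y + P * P)) z :=
    (hyz.matMul hy'z).sub (hy'z.matMul hyz)
  have hsm : HasDerivAt (fun w : ℂ => w • y w) (z • P + (1 : ℂ) • Y) z :=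
    (hasDerivAt_id z).smul hyz
  have hFd : HasDerivAt (deriv (deriv y))
      (κ • ((P * P + Y * Q) - (Q * Y + P * P))
        + (2 : ℂ) • (P * (Y * Y) + Y * (P * Y + Y * P)) + (z • P + (1 : ℂ) • Y) + 0) z := by
    rw [hF]
    exact (((hcomm.const_smul κ).add (hcube.const_smul (2 : ℂ))).add hsm).add
      (hasDerivAt_const z a)
  rw [show deriv (deriv (deriv y)) z = _ from hFd.deriv]
  have h3 : ∀ X : Matrix (Fin n) (Fin n) ℂ, (3 : Matrix (Fin n) (Fin n) ℂ) * X = (3 : ℂ) • X := by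
    intro X
    rw [Algebra.smul_def, map_ofNat]
  rw [h3, h3, hQ, heq z, hd]
  rcases hκ with h | h <;> subst h <;>
    simp only [one_smul, neg_smul, neg_one_smul, pow_succ, pow_zero, one_mul, neg_neg] <;>
  · simp only [smul_sub, smul_add, mul_add, add_mul, mul_sub, sub_mul, mul_smul_comm,
      smul_mul_assoc, smul_smul, mul_assoc, neg_mul, mul_neg, smul_neg, neg_add, sub_neg_eq_add]
    module
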